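/- Let j and k be positive integers with j ≤ k, let c, z ∈ ℂ, and for each i ∈ {1,…,k} let r_i ∈ ℂ with |r_i| > 1. Let f_j(w) = exp(c·w^j). Then exp(c·z^j) = ∏_{m=1}^{k} Q(f_j, F*_{max=m}, z) = ∏_{m=1}^{k} ∏_{S ⊆ {1,…,m}, m ∈ S} P(f_j, S, z)^{(−1)^{|S|−1}}, where each geometric sampling product P(f_j, S, z) converges unconditionally. -/

import Mathlib

/-- Geometric sampling point `X_{k,n}(r) = (r^k - 1)^{1/k} / r^n` (principal branch). -/
noncomputable def X (k n : ℕ) (r : ℂ) : ℂ := (r ^ k - 1) ^ ((k : ℂ))⁻¹ / r ^ n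

/-- Geometric sampling product `P(f, S, z)`. -/
noncomputable def P (f : ℂ → ℂ) (r : ℕ → ℂ) (S : Finset ℕ) (z : ℂ) : ℂ :=
  ∏' ν : {x // x ∈ S} → ℕ+, f ((∏ k : {x // x ∈ S}, X k.1 (ν k : ℕ) (r k.1)) * z)

/-- Geometric sampling quotient `Q(f, F, z) = ∏_{S ∈ F} P(f,S,z)^{(-1)^{|S|-1}}`
(the exponent `(-1)^{|S|+1}` agrees with `(-1)^{|S|-1}`, also for `S = ∅`). -/
noncomputable def Q (f : ℂ → ℂ) (r : ℕ → ℂ) (F : Finset (Finset ℕ)) (z : ℂ) : ℂ :=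
  ∏ S ∈ F, P f r S z ^ ((-1 : ℤ) ^ (S.card + 1))

/-- `F*_{max = m}`: the family of subsets of `{1, …, m}` containing `m`. -/
def Fmax (m : ℕ) : Finset (Finset ℕ) :=
  ((Finset.Icc 1 m).powerset).filter (fun S => m ∈ S)

set_option maxHeartbeats 1000000

open Complex Filter
set_option maxHeartbeats 1000000

lemma hasProd_cexp {ι : Type*} {f : ι → ℂ} {a : ℂ} (h : HasSum f a) :
    HasProd (fun i => Complex.exp (f i)) (Complex.exp a) :=
  Filter.Tendsto.congr (fun s => Complex.exp_sum s f) ((Complex.continuous_exp.tendsto a).comp h)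

lemma fubini_pi (ι : Type) [Fintype ι] (g : ι → ℕ+ → ℂ) (hg : ∀ i, Summable (g i)) :
    HasSum (fun ν : ι → ℕ+ => ∏ i, g i (ν i)) (∏ i, ∑' n, g i n) := by
  revert g
  refine Fintype.induction_empty_option
    (P := fun ι _ => ∀ g : ι → ℕ+ → ℂ, (∀ i, Summable (g i)) →
      HasSum (fun ν : ι → ℕ+ => ∏ i, g i (ν i)) (∏ i, ∑' n, g i n)) ?_ ?_ ?_ ι
  · intro α β _ e ih g hg
    letI : Fintype α := Fintype.ofEquiv β e.symm
    have h1 := ih (fun a => g (e a)) (fun a => hg (e a))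
    have hE : (fun μ : β → ℕ+ => ∏ b, g b (μ b)) ∘ (Equiv.arrowCongr e (Equiv.refl ℕ+))
        = fun ν : α → ℕ+ => ∏ a, g (e a) (ν a) := by
      funext ν
      simp only [Function.comp_apply, Equiv.arrowCongr_apply, Equiv.refl_apply]
      exact Fintype.prod_equiv e.symm (fun b => g b (ν (e.symm b)))
        (fun a => g (e a) (ν a)) (fun x => by simp)
    have hprod : (∏ b, ∑' n, g b n) = ∏ a, ∑' n, g (e a) n :=
      Fintype.prod_equiv e.symm (fun b => ∑' n, g b n) (fun a => ∑' n, g (e a) n)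
        (fun x => by simp)
    rw [hprod]
    exact ((Equiv.arrowCongr e (Equiv.refl ℕ+)).hasSum_iff).mp (by rw [hE]; exact h1)
  · intro g hg
    simp only [Finset.univ_eq_empty, Finset.prod_empty]
    exact hasSum_single (f := fun _ : PEmpty → ℕ+ => (1:ℂ)) default
      (fun b hb => absurd (Subsingleton.elim b default) hb)
  · intro α _ ih g hg
    have ihs := ih (fun a => g (some a)) (fun a => hg (some a))
    have h0 : HasSum (g none) (∑' n, g none n) := (hg none).hasSum
    have hsum : Summable (fun x : ℕ+ × (α → ℕ+) =>
        g none x.1 * ∏ a, g (some a) (x.2 a)) := by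
      apply Summable.of_norm
      have := ((summable_norm_iff.mpr (hg none)).mul_of_nonneg
        (summable_norm_iff.mpr ihs.summable) (fun _ => norm_nonneg _) (fun _ => norm_nonneg _))
      simpa [norm_mul] using this
    have hmul := h0.mul ihs hsum
    rw [Fintype.prod_option (fun i => ∑' n, g i n)]
    have hfe : (fun μ : Option α → ℕ+ => ∏ i, g i (μ i)) ∘
        (Equiv.piOptionEquivProd (β := fun _ : Option α => ℕ+)).symm
        = fun x : ℕ+ × (α → ℕ+) => g none x.1 * ∏ a, g (some a) (x.2 a) := by
      funext x
      simp [Fintype.prod_option]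
    exact ((Equiv.piOptionEquivProd (β := fun _ : Option α => ℕ+)).symm.hasSum_iff).mp
      (hfe ▸ hmul)



lemma hasSum_X (j i : ℕ) (r : ℂ) (hr : 1 < ‖r‖) (hj : 1 ≤ j) :
    HasSum (fun n : ℕ+ => X i n r ^ j)
      (((r^i - 1) ^ ((i:ℂ))⁻¹)^j * ((r^j)⁻¹ * (1 - (r^j)⁻¹)⁻¹)) := by
  have hj0 : j ≠ 0 := by omega
  have hw : ‖(r^j)⁻¹‖ < 1 := by
    rw [norm_inv, norm_pow]
    exact inv_lt_one_of_one_lt₀ (one_lt_pow₀ hr hj0)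
  set C := ((r^i - 1) ^ ((i:ℂ))⁻¹)^j with hC
  set w := (r^j)⁻¹ with hwdef
  have key : HasSum (fun n : ℕ => C * w^(n+1)) (C * (w * (1-w)⁻¹)) := by
    have h := (hasSum_geometric_of_norm_lt_one hw).mul_left (C*w)
    have : (fun n : ℕ => C * w ^ (n+1)) = fun n : ℕ => C * w * w ^ n := by
      funext n; rw [pow_succ]; ring
    rw [this, ← mul_assoc]
    exact h
  refine (Equiv.pnatEquivNat.symm.hasSum_iff).mp ?_
  have hfe : (fun n : ℕ+ => X i n r ^ j) ∘ Equiv.pnatEquivNat.symm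
      = fun n : ℕ => C * w^(n+1) := by
    funext n
    simp only [Function.comp_apply, Equiv.pnatEquivNat_symm_apply]
    rw [X, div_pow, ← pow_right_comm, div_eq_mul_inv, ← inv_pow, ← hwdef, ← hC,
      Nat.succPNat_coe]
  rw [hfe]
  exact key

lemma Aj_eq_one (j : ℕ) (hj : 1 ≤ j) (r : ℂ) (hr : 1 < ‖r‖) :
    (((r^j - 1) ^ ((j:ℂ))⁻¹)^j * ((r^j)⁻¹ * (1 - (r^j)⁻¹)⁻¹)) = 1 := by
  have hj0 : j ≠ 0 := by omega
  have hr0 : r ≠ 0 := by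
    intro h; rw [h] at hr; simp at hr; linarith
  have h1 : r ^ j ≠ 0 := pow_ne_zero _ hr0
  have h2 : r ^ j - 1 ≠ 0 := by
    intro h
    rw [sub_eq_zero] at h
    have : ‖r ^ j‖ = 1 := by rw [h]; simp
    rw [norm_pow] at this
    have := one_lt_pow₀ hr hj0
    linarith
  rw [Complex.cpow_nat_inv_pow _ hj0]
  have h3 : 1 - (r^j)⁻¹ = (r^j - 1) / r^j := by field_simp
  rw [h3]
  field_simp

lemma comb (k j : ℕ) (A : ℕ → ℂ) (hj : j ∈ Finset.Icc 1 k) (hAj : A j = 1) :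
    ∑ m ∈ Finset.Icc 1 k, ∑ S ∈ Fmax m, (-1:ℂ)^(S.card+1) * ∏ i ∈ S, A i = 1 := by
  classical
  have hdisj : (↑(Finset.Icc 1 k) : Set ℕ).PairwiseDisjoint Fmax := by
    intro m _ m' _ hne
    refine Finset.disjoint_left.mpr fun S hS hS' => ?_
    simp only [Fmax, Finset.mem_filter, Finset.mem_powerset] at hS hS'
    exact hne (le_antisymm (Finset.mem_Icc.mp (hS'.1 hS.2)).2
      (Finset.mem_Icc.mp (hS.1 hS'.2)).2)
  have hunion : (Finset.Icc 1 k).biUnion Fmax = ((Finset.Icc 1 k).powerset).erase ∅ := by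
    ext S
    simp only [Finset.mem_biUnion, Finset.mem_erase, Finset.mem_powerset, Fmax,
      Finset.mem_filter]
    constructor
    · rintro ⟨m, hm, hSm, hmS⟩
      exact ⟨Finset.ne_empty_of_mem hmS,
        hSm.trans (Finset.Icc_subset_Icc_right (Finset.mem_Icc.mp hm).2)⟩
    · rintro ⟨hne, hsub⟩
      have hS : S.Nonempty := Finset.nonempty_of_ne_empty hne
      exact ⟨S.max' hS, hsub (S.max'_mem hS), fun x hx =>
        Finset.mem_Icc.mpr ⟨(Finset.mem_Icc.mp (hsub hx)).1, S.le_max' x hx⟩, S.max'_mem hS⟩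
  have hneg : ∀ S : Finset ℕ, ∏ i ∈ S, -A i = (-1:ℂ)^S.card * ∏ i ∈ S, A i := by
    intro S
    calc ∏ i ∈ S, -A i = ∏ i ∈ S, (-1) * A i := by simp
      _ = (∏ _i ∈ S, (-1:ℂ)) * ∏ i ∈ S, A i := Finset.prod_mul_distrib
      _ = (-1:ℂ)^S.card * ∏ i ∈ S, A i := by rw [Finset.prod_const]
  have hps : ∑ S ∈ (Finset.Icc 1 k).powerset, (-1:ℂ)^(S.card+1) * ∏ i ∈ S, A i = 0 := by
    have h0' := Finset.prod_add (fun i => -A i) (fun _ => (1:ℂ)) (Finset.Icc 1 k)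
    have h0 : (0:ℂ) = ∑ S ∈ (Finset.Icc 1 k).powerset,
        (∏ i ∈ S, -A i) * ∏ _i ∈ (Finset.Icc 1 k) \ S, (1:ℂ) := by
      rw [← h0']
      exact (Finset.prod_eq_zero hj (by rw [hAj]; ring)).symm
    calc ∑ S ∈ (Finset.Icc 1 k).powerset, (-1:ℂ)^(S.card+1) * ∏ i ∈ S, A i
        = ∑ S ∈ (Finset.Icc 1 k).powerset,
            -((∏ i ∈ S, -A i) * ∏ _i ∈ (Finset.Icc 1 k) \ S, (1:ℂ)) :=
          Finset.sum_congr rfl (fun S _ => by rw [hneg]; simp [pow_succ]; try ring)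
      _ = -∑ S ∈ (Finset.Icc 1 k).powerset,
            (∏ i ∈ S, -A i) * ∏ _i ∈ (Finset.Icc 1 k) \ S, (1:ℂ) := Finset.sum_neg_distrib _
      _ = 0 := by rw [← h0]; simp
  rw [← Finset.sum_biUnion hdisj, hunion,
    Finset.sum_erase_eq_sub (Finset.empty_mem_powerset _), hps]
  simp


theorem stmt_4 (j k : ℕ) (hj : 1 ≤ j) (hjk : j ≤ k) (c z : ℂ)
    (r : ℕ → ℂ) (hr : ∀ i ∈ Finset.Icc 1 k, 1 < ‖r i‖) :
    (∀ m ∈ Finset.Icc 1 k, ∀ S ∈ Fmax m,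
      Multipliable (fun ν : {x // x ∈ S} → ℕ+ =>
        Complex.exp (c * ((∏ i : {x // x ∈ S}, X i.1 (ν i : ℕ) (r i.1)) * z) ^ j))) ∧
    Complex.exp (c * z ^ j) =
      ∏ m ∈ Finset.Icc 1 k, Q (fun w => Complex.exp (c * w ^ j)) r (Fmax m) z := by
  classical
  set A : ℕ → ℂ := fun i =>
    (((r i)^i - 1) ^ ((i:ℂ))⁻¹)^j * (((r i)^j)⁻¹ * (1 - ((r i)^j)⁻¹)⁻¹) with hA
  have hAsum : ∀ i ∈ Finset.Icc 1 k, HasSum (fun n : ℕ+ => X i n (r i) ^ j) (A i) :=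
    fun i hi => hasSum_X j i (r i) (hr i hi) hj
  have hAj : A j = 1 := Aj_eq_one j hj (r j) (hr j (Finset.mem_Icc.mpr ⟨hj, hjk⟩))
  have hkey : ∀ S : Finset ℕ, S ⊆ Finset.Icc 1 k →
      HasProd (fun ν : {x // x ∈ S} → ℕ+ =>
        Complex.exp (c * ((∏ i : {x // x ∈ S}, X i.1 (ν i : ℕ) (r i.1)) * z) ^ j))
        (Complex.exp (c * z ^ j * ∏ i ∈ S, A i)) := by
    intro S hS
    have hfub := fubini_pi {x // x ∈ S} (fun i n => X i.1 n (r i.1) ^ j)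
      (fun i => (hAsum i.1 (hS i.2)).summable)
    have hts : (∏ i : {x // x ∈ S}, ∑' n : ℕ+, X i.1 n (r i.1) ^ j)
        = ∏ i ∈ S, A i := by
      rw [← Finset.prod_coe_sort S A]
      exact Finset.prod_congr rfl (fun i _ => (hAsum i.1 (hS i.2)).tsum_eq)
    rw [hts] at hfub
    have h2 := hfub.mul_left (c * z ^ j)
    have heq : (fun ν : {x // x ∈ S} → ℕ+ =>
        Complex.exp (c * z ^ j * ∏ i, X i.1 (ν i : ℕ) (r i.1) ^ j))
        = fun ν => Complex.exp (c * ((∏ i, X i.1 (ν i : ℕ) (r i.1)) * z) ^ j) := by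
      funext ν
      congr 1
      rw [mul_pow, Finset.prod_pow]
      ring
    exact heq ▸ hasProd_cexp h2
  have hSsub : ∀ m ∈ Finset.Icc 1 k, ∀ S ∈ Fmax m, S ⊆ Finset.Icc 1 k := by
    intro m hm S hS
    simp only [Fmax, Finset.mem_filter, Finset.mem_powerset] at hS
    exact hS.1.trans (Finset.Icc_subset_Icc_right (Finset.mem_Icc.mp hm).2)
  refine ⟨fun m hm S hS => (hkey S (hSsub m hm S hS)).multipliable, ?_⟩
  have hQ : ∀ m ∈ Finset.Icc 1 k, Q (fun w => Complex.exp (c * w ^ j)) r (Fmax m) z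
      = Complex.exp (∑ S ∈ Fmax m,
          ((-1:ℂ)^(S.card+1) * (c * z ^ j * ∏ i ∈ S, A i))) := by
    intro m hm
    rw [Complex.exp_sum]
    refine Finset.prod_congr rfl fun S hS => ?_
    rw [show P (fun w => Complex.exp (c * w ^ j)) r S z
        = Complex.exp (c * z ^ j * ∏ i ∈ S, A i) from (hkey S (hSsub m hm S hS)).tprod_eq,
      ← Complex.exp_int_mul]
    congr 1
    push_cast
    ring
  rw [Finset.prod_congr rfl hQ, ← Complex.exp_sum]
  congr 1
  have hc := comb k j A (Finset.mem_Icc.mpr ⟨hj, hjk⟩) hAj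
  calc c * z ^ j = (c * z ^ j) * 1 := by ring
    _ = (c * z ^ j) * ∑ m ∈ Finset.Icc 1 k, ∑ S ∈ Fmax m,
          (-1:ℂ)^(S.card+1) * ∏ i ∈ S, A i := by rw [hc]
    _ = ∑ m ∈ Finset.Icc 1 k, ∑ S ∈ Fmax m,
          (-1:ℂ)^(S.card+1) * (c * z ^ j * ∏ i ∈ S, A i) := by
        rw [Finset.mul_sum]
        refine Finset.sum_congr rfl fun m _ => ?_
        rw [Finset.mul_sum]
        exact Finset.sum_congr rfl fun S _ => by ring
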